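/- arXiv:0804.1490 — 3 statements merged into one kernel-verified Lean document; each statement's English description precedes it below -/
import Mathlib

section
/- Let K ≥ 1, n_t ≥ 1, n_r ≥ 1 be integers and let r be a real number with 0 ≤ r ≤ min(n_t, n_r/(K+1)). Then min over k ∈ {1, …, K} of d*_{k·n_t, n_r}(k·r) equals d*_{n_t, n_r}(r); i.e., in the lightly loaded regime the symmetric diversity-multiplexing tradeoff of the K-user MIMO multiple access channel coincides with the single-user tradeoff. -/
/-- The Zheng–Tse diversity-multiplexing tradeoff curve `d*_{m,n}` of an `m × n` MIMO
Rayleigh point-to-point channel: the continuous piecewise-linear function with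
`d*(k) = (m−k)(n−k)` at integers `k` and affine on each interval `[k, k+1]`; explicitly,
for `k = ⌊r⌋`, `d*(r) = (m−k)(n−k) − (r−k)(m+n−2k−1)`. -/
noncomputable def dstar (m n : ℕ) (r : ℝ) : ℝ :=
  ((m : ℝ) - (⌊r⌋ : ℝ)) * ((n : ℝ) - (⌊r⌋ : ℝ)) -
    (r - (⌊r⌋ : ℝ)) * ((m : ℝ) + (n : ℝ) - 2 * (⌊r⌋ : ℝ) - 1)

lemma dstar_eq (m n : ℕ) (r : ℝ) :
    dstar m n r = ((m : ℝ) - r) * ((n : ℝ) - r) + Int.fract r * (1 - Int.fract r) := by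
  unfold dstar Int.fract
  ring

/-- The purely real-arithmetic core inequality. -/
lemma key_ineq (k M N : ℤ) (a t s X : ℝ) (hk : 2 ≤ k)
    (hat : 1 ≤ a + t) (ht0 : 0 < t) (ht1 : t < 1) (hs0 : 0 ≤ s) (hs1 : s < 1)
    (hX : 0 ≤ X) (hN : X + s + t = (N : ℝ)) (hsM : s = (k : ℝ) * t - (M : ℝ)) :
    t * (1 - t) - s * (1 - s) ≤ a * ((k : ℝ) - 1) * X := by
  have hk' : (2 : ℝ) ≤ (k : ℝ) := by exact_mod_cast hk
  have hkpos : (0 : ℝ) < (k : ℝ) := by linarith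
  have hk1 : (0 : ℝ) ≤ (k : ℝ) - 1 := by linarith
  have ha : 1 - t ≤ a := by linarith
  have ha0 : 0 ≤ a := by linarith
  have hM1 : (M : ℝ) ≤ (k : ℝ) - 1 := by
    have hkt1 : (k : ℝ) * t < (k : ℝ) * 1 := by
      exact mul_lt_mul_of_pos_left ht1 hkpos
    have h1 : (M : ℝ) < (k : ℝ) := by nlinarith [hkt1]
    have h2 : M < k := by exact_mod_cast h1
    have h3 : M ≤ k - 1 := by omega
    calc (M : ℝ) ≤ ((k - 1 : ℤ) : ℝ) := by exact_mod_cast h3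
      _ = (k : ℝ) - 1 := by push_cast; ring
  have h1 : t - s ≤ a * ((k : ℝ) - 1) := by
    have e := mul_le_mul_of_nonneg_right ha hk1
    nlinarith [e]
  have hN1 : 1 ≤ N := by
    have h0 : (0 : ℝ) < (N : ℝ) := by linarith
    have : 0 < N := by exact_mod_cast h0
    omega
  rcases eq_or_lt_of_le hN1 with hN2 | hN2
  · -- N = 1 : X = 1 - s - t
    have hX1 : X = 1 - s - t := by
      have : (N : ℝ) = 1 := by exact_mod_cast hN2.symm
      linarith
    calc t * (1 - t) - s * (1 - s) = (t - s) * X := by rw [hX1]; ring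
      _ ≤ a * ((k : ℝ) - 1) * X := mul_le_mul_of_nonneg_right h1 hX
  · -- 2 ≤ N : X ≥ 2 - s - t
    have hN2' : (2 : ℝ) ≤ (N : ℝ) := by exact_mod_cast hN2
    have hX2 : 2 - s - t ≤ X := by linarith
    rcases le_or_gt s t with hst | hst
    · rcases le_or_gt (s + t) 1 with h1st | h1st
      · -- t ≥ s, s + t ≤ 1
        have hX1' : 1 - s - t ≤ X := by linarith
        calc t * (1 - t) - s * (1 - s) = (t - s) * (1 - s - t) := by ring
          _ ≤ (a * ((k : ℝ) - 1)) * X :=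
            mul_le_mul h1 hX1' (by linarith) (by positivity)
          _ = a * ((k : ℝ) - 1) * X := by ring
      · -- t ≥ s, s + t > 1 : LHS ≤ 0
        nlinarith [mul_nonneg (show (0:ℝ) ≤ t - s by linarith)
            (show (0:ℝ) ≤ s + t - 1 by linarith),
          mul_nonneg (mul_nonneg ha0 hk1) hX]
    · rcases le_or_gt (s + t) 1 with h1st | h1st
      · -- s > t, s + t ≤ 1 : LHS ≤ 0
        nlinarith [mul_nonneg (show (0:ℝ) ≤ s - t by linarith)
            (show (0:ℝ) ≤ 1 - s - t by linarith),
          mul_nonneg (mul_nonneg ha0 hk1) hX]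
      · -- hard case : s > t, s + t > 1
        have hkt : (k : ℝ) * t < (M : ℝ) + 1 := by linarith
        have hMt : (M : ℝ) < ((k : ℝ) - 1) * t := by linarith
        have hMk : (M : ℝ) + 1 ≤ (k : ℝ) - 1 := by
          have e0 : ((k : ℝ) - 1) * t < ((k : ℝ) - 1) * 1 :=
            mul_lt_mul_of_pos_left ht1 (by linarith)
          have h1' : (M : ℝ) < (k : ℝ) - 1 := by linarith
          have h2' : M < k - 1 := by exact_mod_cast (by push_cast; linarith : (M:ℝ) < ((k-1:ℤ):ℝ))
          have h3' : M + 1 ≤ k - 1 := by omega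
          calc (M : ℝ) + 1 = ((M + 1 : ℤ) : ℝ) := by push_cast; ring
            _ ≤ ((k - 1 : ℤ) : ℝ) := by exact_mod_cast h3'
            _ = (k : ℝ) - 1 := by push_cast; ring
        set A : ℝ := (k : ℝ) - (M : ℝ) - 1 with hA
        have hA1 : 1 ≤ A := by simp only [hA]; linarith
        have hA0 : 0 < A := by linarith
        have khs : (k : ℝ) * s = (k : ℝ) * ((k : ℝ) * t) - (k : ℝ) * (M : ℝ) := by
          rw [hsM]; ring
        have hint1 : ((k : ℝ) - 1) * ((k : ℝ) * t) < ((k : ℝ) - 1) * ((M : ℝ) + 1) :=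
          mul_lt_mul_of_pos_left hkt (by linarith)
        have hint2 : ((k : ℝ) + 1) * ((k : ℝ) * t) < ((k : ℝ) + 1) * ((M : ℝ) + 1) :=
          mul_lt_mul_of_pos_left hkt (by linarith)
        have hint3 : (k : ℝ) * (1 - t) ≤ (k : ℝ) * a :=
          mul_le_mul_of_nonneg_left ha (le_of_lt hkpos)
        have hint4 : (k : ℝ) * (2 - s - t) ≤ (k : ℝ) * X :=
          mul_le_mul_of_nonneg_left hX2 (le_of_lt hkpos)
        -- bounds multiplied through by k
        have c2 : (k : ℝ) * (s - t) ≤ A := by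
          simp only [hA]; linarith [hint1, khs]
        have c3 : (k : ℝ) * (s + t - 1) ≤ (M : ℝ) + 1 := by
          linarith [hint2, khs]
        have c6 : A ≤ (k : ℝ) * a := by
          simp only [hA]; linarith [hint3, hkt]
        have c7 : A ≤ (k : ℝ) * X := by
          simp only [hA]; linarith [hint4, hint2, khs]
        have c4 : ((k : ℝ) * (s - t)) * ((k : ℝ) * (s + t - 1)) ≤ A * ((M : ℝ) + 1) :=
          mul_le_mul c2 c3
            (mul_nonneg (le_of_lt hkpos) (by linarith)) (le_of_lt hA0)
        have c5 : A * ((M : ℝ) + 1) ≤ A * (((k : ℝ) - 1) * A) := by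
          have e1 : ((k : ℝ) - 1) * 1 ≤ ((k : ℝ) - 1) * A :=
            mul_le_mul_of_nonneg_left hA1 hk1
          have e2 : (M : ℝ) + 1 ≤ ((k : ℝ) - 1) * A := by linarith
          exact mul_le_mul_of_nonneg_left e2 (le_of_lt hA0)
        have c8 : A * (((k : ℝ) - 1) * A) ≤ ((k : ℝ) * a) * (((k : ℝ) - 1) * ((k : ℝ) * X)) := by
          have hXA : (0:ℝ) ≤ (k:ℝ) * X := by positivity
          have e1 : ((k : ℝ) - 1) * A ≤ ((k : ℝ) - 1) * ((k : ℝ) * X) :=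
            mul_le_mul_of_nonneg_left c7 hk1
          calc A * (((k : ℝ) - 1) * A) ≤ A * (((k : ℝ) - 1) * ((k : ℝ) * X)) :=
                mul_le_mul_of_nonneg_left e1 (le_of_lt hA0)
            _ ≤ ((k : ℝ) * a) * (((k : ℝ) - 1) * ((k : ℝ) * X)) := by
                apply mul_le_mul_of_nonneg_right c6
                positivity
        have main : (k : ℝ)^2 * ((s - t) * (s + t - 1)) ≤ (k : ℝ)^2 * (a * ((k : ℝ) - 1) * X) := by
          linarith [c4, c5, c8]
        have hcancel : (s - t) * (s + t - 1) ≤ a * ((k : ℝ) - 1) * X :=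
          le_of_mul_le_mul_left main (by positivity : (0:ℝ) < (k:ℝ)^2)
        linarith [hcancel, (by ring : t * (1 - t) - s * (1 - s) = (s - t) * (s + t - 1))]

lemma dstar_le_of_mem (K nt nr : ℕ) (hK : 1 ≤ K) (hnt : 1 ≤ nt) (hnr : 1 ≤ nr)
    (r : ℝ) (hr0 : 0 ≤ r) (hrnt : r ≤ (nt : ℝ)) (hrK : ((K : ℝ) + 1) * r ≤ (nr : ℝ))
    (k : ℕ) (hk1 : 1 ≤ k) (hkK : k ≤ K) :
    dstar nt nr r ≤ dstar (k * nt) nr ((k : ℝ) * r) := by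
  rcases eq_or_lt_of_le hk1 with h1 | h2
  · subst h1; simp [one_mul]
  · -- 2 ≤ k
    have hk2 : 2 ≤ k := h2
    set t := Int.fract r with htdef
    set s := Int.fract ((k : ℝ) * r) with hsdef
    have ht0 : 0 ≤ t := Int.fract_nonneg r
    have ht1 : t < 1 := Int.fract_lt_one r
    have hs0 : 0 ≤ s := Int.fract_nonneg _
    have hs1 : s < 1 := Int.fract_lt_one _
    have hkK' : ((k : ℝ) + 1) ≤ (K : ℝ) + 1 := by
      have : (k : ℝ) ≤ (K : ℝ) := by exact_mod_cast hkK
      linarith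
    have hX : 0 ≤ (nr : ℝ) - ((k : ℝ) + 1) * r := by
      have : ((k : ℝ) + 1) * r ≤ ((K : ℝ) + 1) * r := mul_le_mul_of_nonneg_right hkK' hr0
      linarith
    have ha0 : 0 ≤ (nt : ℝ) - r := by linarith
    -- decomposition facts
    have hfloorr : (0:ℤ) ≤ ⌊r⌋ := Int.floor_nonneg.mpr hr0
    set M : ℤ := ⌊(k : ℝ) * t⌋ with hMdef
    have hfloorkr : ⌊(k : ℝ) * r⌋ = (k : ℤ) * ⌊r⌋ + M := by
      have : (k : ℝ) * r = ((k : ℤ) * ⌊r⌋ : ℤ) + (k : ℝ) * t := by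
        push_cast
        simp only [htdef, Int.fract]
        ring
      rw [this, Int.floor_intCast_add]
    have hsM : s = (k : ℝ) * t - (M : ℝ) := by
      simp only [hsdef, Int.fract, hfloorkr]
      push_cast
      simp only [htdef, Int.fract]
      ring
    set N : ℤ := (nr : ℤ) - ⌊(k : ℝ) * r⌋ - ⌊r⌋ with hNdef
    have hN : ((nr : ℝ) - ((k : ℝ) + 1) * r) + s + t = (N : ℝ) := by
      simp only [hNdef, hsdef, htdef, Int.fract]
      push_cast
      ring
    -- rewrite goal
    rw [dstar_eq, dstar_eq]
    have hcast : ((k * nt : ℕ) : ℝ) = (k : ℝ) * (nt : ℝ) := by push_cast; ring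
    rw [hcast]
    rw [← htdef, ← hsdef]
    have hk2' : (2 : ℝ) ≤ (k : ℝ) := by exact_mod_cast hk2
    rcases eq_or_lt_of_le ht0 with ht0' | ht0'
    · -- t = 0 : everything elementary
      have hprod : 0 ≤ ((nt : ℝ) - r) * ((k : ℝ) - 1) * ((nr : ℝ) - ((k : ℝ) + 1) * r) :=
        mul_nonneg (mul_nonneg ha0 (by linarith)) hX
      have hs2 : 0 ≤ s * (1 - s) := mul_nonneg hs0 (by linarith)
      nlinarith [hprod, hs2, ht0'.symm]
    · -- t > 0
      have hat : 1 ≤ ((nt : ℝ) - r) + t := by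
        have hfl : (⌊r⌋ : ℝ) < r := by
          have := Int.fract_pos.mp ht0'
          rcases lt_or_eq_of_le (Int.floor_le r) with h | h
          · exact h
          · exact absurd h.symm this
        have h1 : (⌊r⌋ : ℝ) < (nt : ℝ) := lt_of_lt_of_le hfl hrnt
        have h2 : ⌊r⌋ < (nt : ℤ) := by exact_mod_cast h1
        have h3 : ⌊r⌋ + 1 ≤ (nt : ℤ) := h2
        have h4 : ((⌊r⌋ : ℝ) + 1) ≤ (nt : ℝ) := by exact_mod_cast h3
        simp only [htdef, Int.fract]
        linarith
      have key := key_ineq (k : ℤ) M N ((nt : ℝ) - r) t s ((nr : ℝ) - ((k : ℝ) + 1) * r)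
        (by exact_mod_cast hk2) hat ht0' ht1 hs0 hs1 hX hN (by exact_mod_cast hsM)
      have hkZ : ((k : ℤ) : ℝ) = (k : ℝ) := by push_cast; ring
      rw [hkZ] at key
      nlinarith [key]

/-- Lightly loaded regime: for `0 ≤ r ≤ min(n_t, n_r/(K+1))`, the symmetric DMT
`min_{k=1,…,K} d*_{k·n_t, n_r}(k·r)` of the `K`-user MIMO multiple access channel
coincides with the single-user tradeoff `d*_{n_t, n_r}(r)`. -/
theorem mac_dmt_lightly_loaded (K nt nr : ℕ) (hK : 1 ≤ K) (hnt : 1 ≤ nt) (hnr : 1 ≤ nr)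
    (r : ℝ) (hr0 : 0 ≤ r) (hr1 : r ≤ min (nt : ℝ) ((nr : ℝ) / ((K : ℝ) + 1))) :
    (Finset.Icc 1 K).inf' (Finset.nonempty_Icc.mpr hK)
      (fun k => dstar (k * nt) nr ((k : ℝ) * r)) = dstar nt nr r := by
  have hrnt : r ≤ (nt : ℝ) := le_trans hr1 (min_le_left _ _)
  have hrK : ((K : ℝ) + 1) * r ≤ (nr : ℝ) := by
    have h1 : r ≤ (nr : ℝ) / ((K : ℝ) + 1) := le_trans hr1 (min_le_right _ _)
    have h2 : (0 : ℝ) < (K : ℝ) + 1 := by positivity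
    rw [le_div_iff₀ h2] at h1
    linarith
  apply le_antisymm
  · have h1 : (1 : ℕ) ∈ Finset.Icc 1 K := Finset.mem_Icc.mpr ⟨le_refl _, hK⟩
    have h2 := Finset.inf'_le (fun k : ℕ => dstar (k * nt) nr ((k : ℝ) * r)) h1
    simp only [one_mul, Nat.cast_one] at h2; exact h2
  · apply Finset.le_inf'
    intro k hk
    rw [Finset.mem_Icc] at hk
    exact dstar_le_of_mem K nt nr hK hnt hnr r hr0 hrnt hrK k hk.1 hk.2
end

section
/- Let K ≥ 1, n_t ≥ 1, n_r ≥ 1 be integers and let r be a real number with min(n_t, n_r/(K+1)) ≤ r ≤ min(n_t, n_r/K). Then min over k ∈ {1, …, K} of d*_{k·n_t, n_r}(k·r) equals d*_{K·n_t, n_r}(K·r); i.e., in the heavily loaded regime the symmetric diversity-multiplexing tradeoff of the K-user MIMO multiple access channel coincides with that of a (K·n_t) × n_r antenna-pooled MIMO channel at multiplexing gain K·r. -/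
set_option maxHeartbeats 1000000


lemma dstar_eq_quad (m n : ℕ) (x : ℝ) :
    dstar m n x = ((m : ℝ) - x) * ((n : ℝ) - x) + Int.fract x * (1 - Int.fract x) := by
  unfold dstar Int.fract
  ring

lemma fract_of_Ico_one {x : ℝ} (h1 : 1 ≤ x) (h2 : x < 2) : Int.fract x = x - 1 := by
  have : ⌊x⌋ = 1 := by
    rw [Int.floor_eq_iff]
    constructor <;> [exact_mod_cast h1; exact_mod_cast h2]
  rw [Int.fract, this]; norm_num

lemma fract_of_Ico_negone {x : ℝ} (h1 : -1 ≤ x) (h2 : x < 0) : Int.fract x = x + 1 := by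
  have : ⌊x⌋ = -1 := by
    rw [Int.floor_eq_iff]
    constructor
    · exact_mod_cast h1
    · push_cast; linarith
  rw [Int.fract, this]; push_cast; ring

lemma key_ineq_s9 (K nt nr k : ℕ) (hk1 : 1 ≤ k) (hkK : k ≤ K)
    (r : ℝ) (hr0 : min (nt : ℝ) ((nr : ℝ) / ((K : ℝ) + 1)) ≤ r)
    (hrnt : r ≤ (nt : ℝ)) (hrpos : 0 ≤ r) :
    dstar (K * nt) nr ((K : ℝ) * r) ≤ dstar (k * nt) nr ((k : ℝ) * r) := by
  have hkR : (1 : ℝ) ≤ (k : ℝ) := by exact_mod_cast hk1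
  have hkKR : (k : ℝ) ≤ (K : ℝ) := by exact_mod_cast hkK
  rcases le_or_gt (nt : ℝ) ((nr : ℝ) / ((K : ℝ) + 1)) with hcase | hcase
  · -- min = nt, so r = nt; all fractional parts vanish and both sides are 0
    have hr : r = (nt : ℝ) := le_antisymm hrnt (le_trans (le_min le_rfl hcase) hr0)
    have e1 : (k : ℝ) * r = ((k * nt : ℕ) : ℝ) := by push_cast; rw [hr]
    have e2 : (K : ℝ) * r = ((K * nt : ℕ) : ℝ) := by push_cast; rw [hr]
    rw [dstar_eq_quad, dstar_eq_quad, e1, e2, Int.fract_natCast, Int.fract_natCast]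
    simp
  · -- main case : nr ≤ (K+1) r
    have hmin : (nr : ℝ) / ((K : ℝ) + 1) ≤ r := by rwa [min_eq_right hcase.le] at hr0
    have hKpos : (0 : ℝ) < (K : ℝ) + 1 := by positivity
    have hnrle : (nr : ℝ) ≤ ((K : ℝ) + 1) * r := by
      rw [div_le_iff₀ hKpos] at hmin; linarith
    set A := Int.fract ((k : ℝ) * r) with hA
    set B := Int.fract ((K : ℝ) * r) with hB
    set c := (nt : ℝ) - r with hc
    set w := ((K : ℝ) - (k : ℝ)) * c with hw
    set D := ((K : ℝ) + (k : ℝ)) * r - (nr : ℝ) with hD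
    have hc0 : 0 ≤ c := by simp [hc]; linarith
    have hw0 : 0 ≤ w := mul_nonneg (by linarith) hc0
    have hD0 : 0 ≤ D := by
      have : r ≤ (k : ℝ) * r := le_mul_of_one_le_left hrpos hkR
      simp only [hD]; nlinarith
    have hA0 : 0 ≤ A := Int.fract_nonneg _
    have hA1 : A < 1 := Int.fract_lt_one _
    have hB0 : 0 ≤ B := Int.fract_nonneg _
    have hB1 : B < 1 := Int.fract_lt_one _
    -- fract (A - B) = fract w
    have hfw : Int.fract (A - B) = Int.fract w := by
      rw [Int.fract_eq_fract]
      refine ⟨⌊(K : ℝ) * r⌋ - ⌊(k : ℝ) * r⌋ - ((K - k : ℕ) : ℤ) * (nt : ℤ), ?_⟩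
      have hsub : ((K - k : ℕ) : ℝ) = (K : ℝ) - (k : ℝ) := by
        push_cast [Nat.cast_sub hkK]; ring
      simp only [hA, hB, hw, hc, Int.fract]
      push_cast
      rw [hsub]
      ring
    -- fract D = fract (A + B)
    have hfD : Int.fract D = Int.fract (A + B) := by
      rw [Int.fract_eq_fract]
      refine ⟨⌊(k : ℝ) * r⌋ + ⌊(K : ℝ) * r⌋ - (nr : ℤ), ?_⟩
      simp only [hA, hB, hD, Int.fract]
      push_cast
      ring
    have hgw : Int.fract w ≤ w := by
      have h0 : (0 : ℤ) ≤ ⌊w⌋ := Int.le_floor.mpr (by exact_mod_cast hw0)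
      have hfloor : (0 : ℝ) ≤ (⌊w⌋ : ℝ) := by exact_mod_cast h0
      simp only [Int.fract]; linarith
    have hfD_le : Int.fract D ≤ D := by
      have h0 : (0 : ℤ) ≤ ⌊D⌋ := Int.le_floor.mpr (by exact_mod_cast hD0)
      have hfloor : (0 : ℝ) ≤ (⌊D⌋ : ℝ) := by exact_mod_cast h0
      simp only [Int.fract]; linarith
    have hg0 : 0 ≤ Int.fract w := Int.fract_nonneg _
    have expand : (((k * nt : ℕ) : ℝ) - (k : ℝ) * r) * ((nr : ℝ) - (k : ℝ) * r) -
        (((K * nt : ℕ) : ℝ) - (K : ℝ) * r) * ((nr : ℝ) - (K : ℝ) * r) = w * D := by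
      simp only [hw, hc, hD]
      push_cast
      ring
    clear_value A B c w D
    -- the core inequality
    have main : B * (1 - B) - A * (1 - A) ≤ w * D := by
      rcases le_or_gt B A with hBA | hBA
      · rcases le_or_gt (A + B) 1 with hσ | hσ
        · -- (B-A)(1-A-B) ≤ 0
          nlinarith [mul_nonneg (sub_nonneg.mpr hBA) (by linarith : (0:ℝ) ≤ 1 - A - B),
            mul_nonneg hw0 hD0]
        · -- A - B = fract w ≤ w, A + B - 1 = fract D ≤ D
          have h1 : A - B = Int.fract w := by
            rw [← hfw, Int.fract_eq_self.mpr ⟨by linarith, by linarith⟩]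
          have h2 : A + B - 1 = Int.fract D := by
            rw [hfD, fract_of_Ico_one (by linarith) (by linarith)]
          have hABw : A - B ≤ w := by rw [h1]; exact hgw
          have hσD : A + B - 1 ≤ D := by rw [h2]; exact hfD_le
          nlinarith [mul_le_mul hABw hσD (by linarith) hw0]
      · rcases le_or_gt 1 (A + B) with hσ | hσ
        · -- (B-A)(1-A-B) ≤ 0
          nlinarith [mul_nonneg (by linarith : (0:ℝ) ≤ B - A) (by linarith : (0:ℝ) ≤ A + B - 1),
            mul_nonneg hw0 hD0]
        · -- B > A, A + B < 1
          have hgval : Int.fract w = A - B + 1 := by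
            rw [← hfw, fract_of_Ico_negone (by linarith) (by linarith)]
          have hσval : Int.fract D = A + B := by
            rw [hfD, Int.fract_eq_self.mpr ⟨by linarith, hσ⟩]
          set g := Int.fract w with hgdef
          -- chain: (B-A)(1-A-B) = (1-g)(1-σ) ≤ (1-g)g ≤ gσ ≤ gD ≤ wD
          have hσD : A + B ≤ D := by rw [← hσval]; exact hfD_le
          have hgw' : g ≤ w := hgw
          -- 1 - g = B - A, 1 - σ ≤ g since σ = 2A + 1 - g ≥ 1 - g
          nlinarith [mul_nonneg hg0 (by linarith : (0:ℝ) ≤ D - (A+B)),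
            mul_nonneg hD0 (by linarith : (0:ℝ) ≤ w - g),
            mul_nonneg hg0 (by linarith : (0:ℝ) ≤ A), hA0, hB0]
    -- assemble
    rw [dstar_eq_quad, dstar_eq_quad, ← hA, ← hB]
    nlinarith [main, expand]

/-- Heavily loaded regime: for `min(n_t, n_r/(K+1)) ≤ r ≤ min(n_t, n_r/K)`, the symmetric DMT
`min_{k=1,…,K} d*_{k·n_t, n_r}(k·r)` of the `K`-user MIMO multiple access channel coincides
with that of a `(K·n_t) × n_r` antenna-pooled MIMO channel at multiplexing gain `K·r`. -/
theorem mac_dmt_heavily_loaded (K nt nr : ℕ) (hK : 1 ≤ K) (hnt : 1 ≤ nt) (hnr : 1 ≤ nr)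
    (r : ℝ) (hr0 : min (nt : ℝ) ((nr : ℝ) / ((K : ℝ) + 1)) ≤ r)
    (hr1 : r ≤ min (nt : ℝ) ((nr : ℝ) / (K : ℝ))) :
    (Finset.Icc 1 K).inf' (Finset.nonempty_Icc.mpr hK)
      (fun k => dstar (k * nt) nr ((k : ℝ) * r)) = dstar (K * nt) nr ((K : ℝ) * r) := by
  have hrnt : r ≤ (nt : ℝ) := le_trans hr1 (min_le_left _ _)
  have hrpos : 0 ≤ r := by
    refine le_trans (le_min ?_ ?_) hr0 <;> positivity
  apply le_antisymm
  · exact Finset.inf'_le _ (Finset.mem_Icc.mpr ⟨hK, le_rfl⟩)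
  · apply Finset.le_inf'
    intro k hk
    rw [Finset.mem_Icc] at hk
    exact key_ineq_s9 K nt nr k hk.1 hk.2 r hr0 hrnt hrpos
end

section
/- Let K ≥ 1, n_t ≥ 1, n_r ≥ 1 be integers and let r be a real number with 0 ≤ r ≤ min(n_t, n_r/K). Then min over k ∈ {1, …, K} of d*_{k·n_t, n_r}(k·r) equals min(d*_{n_t, n_r}(r), d*_{K·n_t, n_r}(K·r)); i.e., the minimum over the number k of users in outage is always attained either at k = 1 (single-user error event) or at k = K (all-users error event). -/
set_option maxHeartbeats 1000000


private lemma dstar_expand (nt nr q : ℕ) (x : ℝ) : dstar (q * nt) nr x =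
    ((q : ℝ) * (nt : ℝ) - x) * ((nr : ℝ) - x) +
      (x - (⌊x⌋ : ℝ)) * ((⌊x⌋ : ℝ) + 1 - x) := by
  unfold dstar
  push_cast
  ring

/-- In the "lightly loaded" regime `(i+j)r ≤ nr`, the `i`-user outage curve lies below
the `j`-user one. -/
private lemma branch1 (nt nr i j : ℕ) (hij : i ≤ j)
    (r : ℝ) (h0 : 0 ≤ r) (hrt : r ≤ (nt : ℝ))
    (hsum : ((i : ℝ) + (j : ℝ)) * r ≤ (nr : ℝ)) :
    dstar (i * nt) nr ((i : ℝ) * r) ≤ dstar (j * nt) nr ((j : ℝ) * r) := by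
  rcases eq_or_lt_of_le hij with rfl | hij'
  · exact le_refl _
  rw [dstar_expand, dstar_expand]
  obtain ⟨A, hA⟩ : ∃ z : ℤ, z = ⌊(i : ℝ) * r⌋ := ⟨_, rfl⟩
  obtain ⟨B, hB⟩ : ∃ z : ℤ, z = ⌊(j : ℝ) * r⌋ := ⟨_, rfl⟩
  rw [← hA, ← hB]
  have hcj : (i : ℝ) < (j : ℝ) := by exact_mod_cast hij'
  have hA1 : (A : ℝ) ≤ (i : ℝ) * r := by rw [hA]; exact Int.floor_le _
  have hA2 : (i : ℝ) * r < (A : ℝ) + 1 := by rw [hA]; exact Int.lt_floor_add_one _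
  have hB1 : (B : ℝ) ≤ (j : ℝ) * r := by rw [hB]; exact Int.floor_le _
  have hB2 : (j : ℝ) * r < (B : ℝ) + 1 := by rw [hB]; exact Int.lt_floor_add_one _
  have hd : 0 ≤ (nr : ℝ) - ((i : ℝ) + (j : ℝ)) * r := by linarith
  have hntr : 0 ≤ (nt : ℝ) - r := by linarith
  have hP : 0 ≤ ((nt : ℝ) - r) * (((j : ℝ) - (i : ℝ)) * ((nr : ℝ) - ((i : ℝ) + (j : ℝ)) * r)) :=
    mul_nonneg hntr (mul_nonneg (by linarith) hd)
  by_cases hab : (i : ℝ) * r - A ≤ (j : ℝ) * r - B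
  · by_cases hs : ((i : ℝ) * r - A) + ((j : ℝ) * r - B) ≤ 1
    · -- easy: both correction terms favorable
      nlinarith [hP, mul_nonneg
        (by linarith : (0:ℝ) ≤ ((j : ℝ) * r - B) - ((i : ℝ) * r - A))
        (by linarith : (0:ℝ) ≤ 1 - ((i : ℝ) * r - A) - ((j : ℝ) * r - B))]
    · push_neg at hs
      rcases eq_or_lt_of_le hab with heq | hab'
      · -- a = b
        have hz : (((j : ℝ) * r - B) - ((i : ℝ) * r - A)) *
            (1 - ((i : ℝ) * r - A) - ((j : ℝ) * r - B)) = 0 := by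
          rw [show ((j : ℝ) * r - B) - ((i : ℝ) * r - A) = 0 by linarith]
          ring
        nlinarith [hP, hz]
      · -- hard case: a < b, a + b > 1
        have h2 : (A : ℝ) + B + 1 < ((i : ℝ) + (j : ℝ)) * r := by linarith
        have h3 : A + B + 1 < (nr : ℤ) := by exact_mod_cast lt_of_lt_of_le h2 hsum
        have h4 : ((A : ℝ) + B + 2) ≤ (nr : ℝ) := by exact_mod_cast (by omega : A + B + 2 ≤ (nr : ℤ))
        have hδ2 : 2 - ((i : ℝ) * r - A) - ((j : ℝ) * r - B)
            ≤ (nr : ℝ) - ((i : ℝ) + (j : ℝ)) * r := by linarith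
        by_cases hu : 1 ≤ ((nt : ℝ) - r) * ((j : ℝ) - (i : ℝ))
        · nlinarith [mul_nonneg (by linarith : (0:ℝ) ≤ ((nt : ℝ) - r) * ((j : ℝ) - (i : ℝ)) - 1) hd,
            hδ2,
            sq_nonneg (2 - ((i : ℝ) * r - A) - ((j : ℝ) * r - B)),
            mul_nonneg (by linarith : (0:ℝ) ≤ 2 - 2 * ((j : ℝ) * r - B))
              (by linarith : (0:ℝ) ≤ ((i : ℝ) * r - A) + ((j : ℝ) * r - B) - 1)]
        · push_neg at hu
          rcases eq_or_lt_of_le hrt with hre | hrlt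
          · -- r = nt : fractional parts vanish, contradiction with a < b
            exfalso
            have e1 : (i : ℝ) * r = ((i * nt : ℕ) : ℝ) := by rw [hre]; push_cast; ring
            have e2 : (j : ℝ) * r = ((j * nt : ℕ) : ℝ) := by rw [hre]; push_cast; ring
            have ha0 : A = (i * nt : ℕ) := by rw [hA, e1, Int.floor_natCast]
            have hb0 : B = (j * nt : ℕ) := by rw [hB, e2, Int.floor_natCast]
            rw [ha0, hb0, e1, e2] at hab'
            push_cast at hab'
            linarith
          · -- pinned case: B = A + (j-i)*nt - 1
            have hup : 0 < ((nt : ℝ) - r) * ((j : ℝ) - (i : ℝ)) :=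
              mul_pos (by linarith) (by linarith)
            have hEr : ((B - A - ((j : ℤ) - (i : ℤ)) * ((nt : ℤ) - 1) : ℤ) : ℝ)
                = (B : ℝ) - A - ((j : ℝ) - (i : ℝ)) * ((nt : ℝ) - 1) := by push_cast; ring
            have hlo : ((j : ℤ) - i) - 2 < B - A - ((j : ℤ) - (i : ℤ)) * ((nt : ℤ) - 1) := by
              have h' : ((((j : ℤ) - i) - 2 : ℤ) : ℝ) < ((B - A - ((j : ℤ) - (i : ℤ)) * ((nt : ℤ) - 1) : ℤ) : ℝ) := by
                push_cast
                linarith [hup, hu, hab', hA1, hB2]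
              exact_mod_cast h'
            have hhi : B - A - ((j : ℤ) - (i : ℤ)) * ((nt : ℤ) - 1) < (j : ℤ) - i := by
              have h' : ((B - A - ((j : ℤ) - (i : ℤ)) * ((nt : ℤ) - 1) : ℤ) : ℝ) < (((j : ℤ) - i : ℤ) : ℝ) := by
                push_cast
                linarith [hup, hu, hab', hA1, hB2]
              exact_mod_cast h'
            have hBval : B = A + ((j : ℤ) - i) * nt - 1 := by
              have h5 : B - A - ((j : ℤ) - (i : ℤ)) * ((nt : ℤ) - 1) = (j : ℤ) - i - 1 := by omega
              linear_combination h5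
            rw [hBval] at hB1 hB2 hδ2 ⊢
            push_cast at hB1 hB2 hδ2 ⊢
            have hgap : (0:ℝ) ≤ (nr : ℝ) - 2 * (A : ℝ) - ((j : ℝ) - (i : ℝ)) * (nt : ℝ) - 1 := by
              linarith
            nlinarith [mul_nonneg hup.le hgap, hB2, hA1, hA2]
  · push_neg at hab
    by_cases hs : ((i : ℝ) * r - A) + ((j : ℝ) * r - B) ≤ 1
    · -- hard case: b < a, a + b ≤ 1
      have ha0 : 0 < (i : ℝ) * r - A := lt_of_le_of_lt (by linarith) hab
      have h2 : (A : ℝ) + B < ((i : ℝ) + (j : ℝ)) * r := by linarith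
      have h3 : A + B < (nr : ℤ) := by exact_mod_cast lt_of_lt_of_le h2 hsum
      have h4 : ((A : ℝ) + B + 1) ≤ (nr : ℝ) := by exact_mod_cast (by omega : A + B + 1 ≤ (nr : ℤ))
      have hδ1 : 1 - ((i : ℝ) * r - A) - ((j : ℝ) * r - B)
          ≤ (nr : ℝ) - ((i : ℝ) + (j : ℝ)) * r := by linarith
      by_cases hu : 1 ≤ ((nt : ℝ) - r) * ((j : ℝ) - (i : ℝ))
      · nlinarith [mul_nonneg (by linarith : (0:ℝ) ≤ ((nt : ℝ) - r) * ((j : ℝ) - (i : ℝ)) - 1) hd,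
          hδ1,
          mul_nonneg (by linarith : (0:ℝ) ≤ 1 - ((i : ℝ) * r - A) - ((j : ℝ) * r - B))
            (by linarith : (0:ℝ) ≤ 1 - (((i : ℝ) * r - A) - ((j : ℝ) * r - B)))]
      · push_neg at hu
        rcases eq_or_lt_of_le hrt with hre | hrlt
        · exfalso
          have e1 : (i : ℝ) * r = ((i * nt : ℕ) : ℝ) := by rw [hre]; push_cast; ring
          have e2 : (j : ℝ) * r = ((j * nt : ℕ) : ℝ) := by rw [hre]; push_cast; ring
          have ha0' : A = (i * nt : ℕ) := by rw [hA, e1, Int.floor_natCast]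
          have hb0' : B = (j * nt : ℕ) := by rw [hB, e2, Int.floor_natCast]
          rw [ha0', hb0', e1, e2] at hab
          push_cast at hab
          linarith
        · -- pinned case: B = A + (j-i)*nt
          have hup : 0 < ((nt : ℝ) - r) * ((j : ℝ) - (i : ℝ)) :=
            mul_pos (by linarith) (by linarith)
          have hEr : ((B - A - ((j : ℤ) - (i : ℤ)) * ((nt : ℤ) - 1) : ℤ) : ℝ)
              = (B : ℝ) - A - ((j : ℝ) - (i : ℝ)) * ((nt : ℝ) - 1) := by push_cast; ring
          have hlo : ((j : ℤ) - i) - 1 < B - A - ((j : ℤ) - (i : ℤ)) * ((nt : ℤ) - 1) := by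
            have h' : ((((j : ℤ) - i) - 1 : ℤ) : ℝ) < ((B - A - ((j : ℤ) - (i : ℤ)) * ((nt : ℤ) - 1) : ℤ) : ℝ) := by
              push_cast
              linarith [hup, hu, hab, hA2, hB1]
            exact_mod_cast h'
          have hhi : B - A - ((j : ℤ) - (i : ℤ)) * ((nt : ℤ) - 1) < (j : ℤ) - i + 1 := by
            have h' : ((B - A - ((j : ℤ) - (i : ℤ)) * ((nt : ℤ) - 1) : ℤ) : ℝ) < (((j : ℤ) - i + 1 : ℤ) : ℝ) := by
              push_cast
              linarith [hup, hu, hab, hA2, hB1]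
            exact_mod_cast h'
          have hBval : B = A + ((j : ℤ) - i) * nt := by
            have h5 : B - A - ((j : ℤ) - (i : ℤ)) * ((nt : ℤ) - 1) = (j : ℤ) - i := by omega
            linear_combination h5
          rw [hBval] at hB1 hB2 hδ1 ⊢
          push_cast at hB1 hB2 hδ1 ⊢
          have hgap : (0:ℝ) ≤ (nr : ℝ) - 2 * (A : ℝ) - ((j : ℝ) - (i : ℝ)) * (nt : ℝ) - 1 := by
            linarith
          nlinarith [mul_nonneg hup.le hgap, hB1, hA1, hA2]
    · -- easy: b < a, a + b > 1
      push_neg at hs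
      nlinarith [hP, mul_nonneg
        (by linarith : (0:ℝ) ≤ ((i : ℝ) * r - A) - ((j : ℝ) * r - B))
        (by linarith : (0:ℝ) ≤ ((i : ℝ) * r - A) + ((j : ℝ) * r - B) - 1)]

/-- In the "heavily loaded" regime `nr ≤ (i+j)r` (with `jr ≤ nr`), the `j`-user outage
curve lies below the `i`-user one. -/
private lemma branch2 (nt nr i j : ℕ) (hij : i ≤ j)
    (r : ℝ) (h0 : 0 ≤ r) (hrt : r ≤ (nt : ℝ))
    (hsum : (nr : ℝ) ≤ ((i : ℝ) + (j : ℝ)) * r) (hjr : (j : ℝ) * r ≤ (nr : ℝ)) :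
    dstar (j * nt) nr ((j : ℝ) * r) ≤ dstar (i * nt) nr ((i : ℝ) * r) := by
  rcases eq_or_lt_of_le hij with rfl | hij'
  · exact le_refl _
  rw [dstar_expand, dstar_expand]
  obtain ⟨A, hA⟩ : ∃ z : ℤ, z = ⌊(i : ℝ) * r⌋ := ⟨_, rfl⟩
  obtain ⟨B, hB⟩ : ∃ z : ℤ, z = ⌊(j : ℝ) * r⌋ := ⟨_, rfl⟩
  rw [← hA, ← hB]
  have hcj : (i : ℝ) < (j : ℝ) := by exact_mod_cast hij'
  have hA1 : (A : ℝ) ≤ (i : ℝ) * r := by rw [hA]; exact Int.floor_le _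
  have hA2 : (i : ℝ) * r < (A : ℝ) + 1 := by rw [hA]; exact Int.lt_floor_add_one _
  have hB1 : (B : ℝ) ≤ (j : ℝ) * r := by rw [hB]; exact Int.floor_le _
  have hB2 : (j : ℝ) * r < (B : ℝ) + 1 := by rw [hB]; exact Int.lt_floor_add_one _
  have hσ : 0 ≤ ((i : ℝ) + (j : ℝ)) * r - (nr : ℝ) := by linarith
  have hntr : 0 ≤ (nt : ℝ) - r := by linarith
  have hP : 0 ≤ ((nt : ℝ) - r) * (((j : ℝ) - (i : ℝ)) * (((i : ℝ) + (j : ℝ)) * r - (nr : ℝ))) :=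
    mul_nonneg hntr (mul_nonneg (by linarith) hσ)
  by_cases hab : (i : ℝ) * r - A ≤ (j : ℝ) * r - B
  · by_cases hs : ((i : ℝ) * r - A) + ((j : ℝ) * r - B) < 1
    · -- hard case: a ≤ b, a + b ≤ 1
      rcases eq_or_lt_of_le hab with heq | hab'
      · have hz : (((j : ℝ) * r - B) - ((i : ℝ) * r - A)) *
            (1 - ((i : ℝ) * r - A) - ((j : ℝ) * r - B)) = 0 := by
          rw [show ((j : ℝ) * r - B) - ((i : ℝ) * r - A) = 0 by linarith]
          ring
        nlinarith [hP, hz]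
      · have hb0 : 0 < (j : ℝ) * r - B := lt_of_le_of_lt (by linarith) hab'
        have h2 : ((i : ℝ) + (j : ℝ)) * r < (A : ℝ) + B + 1 := by linarith
        have h3 : (nr : ℤ) < A + B + 1 := by exact_mod_cast lt_of_le_of_lt hsum h2
        have h4 : (nr : ℝ) ≤ (A : ℝ) + B := by exact_mod_cast (by omega : (nr : ℤ) ≤ A + B)
        have hσ1 : ((i : ℝ) * r - A) + ((j : ℝ) * r - B)
            ≤ ((i : ℝ) + (j : ℝ)) * r - (nr : ℝ) := by linarith
        by_cases hu : 1 ≤ ((nt : ℝ) - r) * ((j : ℝ) - (i : ℝ))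
        · nlinarith [mul_nonneg (by linarith : (0:ℝ) ≤ ((nt : ℝ) - r) * ((j : ℝ) - (i : ℝ)) - 1) hσ,
            hσ1, hA1,
            mul_nonneg (by linarith : (0:ℝ) ≤ ((j : ℝ) * r - B) - ((i : ℝ) * r - A))
              (by linarith : (0:ℝ) ≤ ((i : ℝ) * r - A) + ((j : ℝ) * r - B))]
        · push_neg at hu
          rcases eq_or_lt_of_le hrt with hre | hrlt
          · exfalso
            have e1 : (i : ℝ) * r = ((i * nt : ℕ) : ℝ) := by rw [hre]; push_cast; ring
            have e2 : (j : ℝ) * r = ((j * nt : ℕ) : ℝ) := by rw [hre]; push_cast; ring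
            have ha0' : A = (i * nt : ℕ) := by rw [hA, e1, Int.floor_natCast]
            have hb0' : B = (j * nt : ℕ) := by rw [hB, e2, Int.floor_natCast]
            rw [ha0', hb0', e1, e2] at hab'
            push_cast at hab'
            linarith
          · -- pinned: B = A + (j-i)*nt - 1
            have hup : 0 < ((nt : ℝ) - r) * ((j : ℝ) - (i : ℝ)) :=
              mul_pos (by linarith) (by linarith)
            have hEr : ((B - A - ((j : ℤ) - (i : ℤ)) * ((nt : ℤ) - 1) : ℤ) : ℝ)
                = (B : ℝ) - A - ((j : ℝ) - (i : ℝ)) * ((nt : ℝ) - 1) := by push_cast; ring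
            have hlo : ((j : ℤ) - i) - 2 < B - A - ((j : ℤ) - (i : ℤ)) * ((nt : ℤ) - 1) := by
              have h' : ((((j : ℤ) - i) - 2 : ℤ) : ℝ) < ((B - A - ((j : ℤ) - (i : ℤ)) * ((nt : ℤ) - 1) : ℤ) : ℝ) := by
                push_cast
                linarith [hup, hu, hab', hA1, hB2]
              exact_mod_cast h'
            have hhi : B - A - ((j : ℤ) - (i : ℤ)) * ((nt : ℤ) - 1) < (j : ℤ) - i := by
              have h' : ((B - A - ((j : ℤ) - (i : ℤ)) * ((nt : ℤ) - 1) : ℤ) : ℝ) < (((j : ℤ) - i : ℤ) : ℝ) := by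
                push_cast
                linarith [hup, hu, hab', hA1, hB2]
              exact_mod_cast h'
            have hBval : B = A + ((j : ℤ) - i) * nt - 1 := by
              have h5 : B - A - ((j : ℤ) - (i : ℤ)) * ((nt : ℤ) - 1) = (j : ℤ) - i - 1 := by omega
              linear_combination h5
            rw [hBval] at hB1 hB2 hσ1 ⊢
            push_cast at hB1 hB2 hσ1 ⊢
            have hgap : (0:ℝ) ≤ 2 * (A : ℝ) + ((j : ℝ) - (i : ℝ)) * (nt : ℝ) - 1 - (nr : ℝ) := by
              linarith
            nlinarith [mul_nonneg hup.le hgap, hA1, hA2, hB2]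
    · -- easy: a ≤ b, a + b > 1
      push_neg at hs
      nlinarith [hP, mul_nonneg
        (by linarith : (0:ℝ) ≤ ((j : ℝ) * r - B) - ((i : ℝ) * r - A))
        (by linarith : (0:ℝ) ≤ ((i : ℝ) * r - A) + ((j : ℝ) * r - B) - 1)]
  · push_neg at hab
    by_cases hs : ((i : ℝ) * r - A) + ((j : ℝ) * r - B) ≤ 1
    · -- easy: b < a, a + b ≤ 1
      nlinarith [hP, mul_nonneg
        (by linarith : (0:ℝ) ≤ ((i : ℝ) * r - A) - ((j : ℝ) * r - B))
        (by linarith : (0:ℝ) ≤ 1 - ((i : ℝ) * r - A) - ((j : ℝ) * r - B))]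
    · -- hard case: b < a, a + b > 1
      push_neg at hs
      have h2 : ((i : ℝ) + (j : ℝ)) * r < (A : ℝ) + B + 2 := by linarith
      have h3 : (nr : ℤ) < A + B + 2 := by exact_mod_cast lt_of_le_of_lt hsum h2
      have h4 : (nr : ℝ) ≤ (A : ℝ) + B + 1 := by exact_mod_cast (by omega : (nr : ℤ) ≤ A + B + 1)
      have hσ1 : ((i : ℝ) * r - A) + ((j : ℝ) * r - B) - 1
          ≤ ((i : ℝ) + (j : ℝ)) * r - (nr : ℝ) := by linarith
      by_cases hu : 1 ≤ ((nt : ℝ) - r) * ((j : ℝ) - (i : ℝ))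
      · nlinarith [mul_nonneg (by linarith : (0:ℝ) ≤ ((nt : ℝ) - r) * ((j : ℝ) - (i : ℝ)) - 1) hσ,
          hσ1,
          mul_nonneg (by linarith : (0:ℝ) ≤ ((i : ℝ) * r - A) + ((j : ℝ) * r - B) - 1)
            (by linarith : (0:ℝ) ≤ 1 - (((i : ℝ) * r - A) - ((j : ℝ) * r - B)))]
      · push_neg at hu
        rcases eq_or_lt_of_le hrt with hre | hrlt
        · exfalso
          have e1 : (i : ℝ) * r = ((i * nt : ℕ) : ℝ) := by rw [hre]; push_cast; ring
          have e2 : (j : ℝ) * r = ((j * nt : ℕ) : ℝ) := by rw [hre]; push_cast; ring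
          have ha0' : A = (i * nt : ℕ) := by rw [hA, e1, Int.floor_natCast]
          have hb0' : B = (j * nt : ℕ) := by rw [hB, e2, Int.floor_natCast]
          rw [ha0', hb0', e1, e2] at hab
          push_cast at hab
          linarith
        · -- pinned: B = A + (j-i)*nt
          have hup : 0 < ((nt : ℝ) - r) * ((j : ℝ) - (i : ℝ)) :=
            mul_pos (by linarith) (by linarith)
          have hEr : ((B - A - ((j : ℤ) - (i : ℤ)) * ((nt : ℤ) - 1) : ℤ) : ℝ)
              = (B : ℝ) - A - ((j : ℝ) - (i : ℝ)) * ((nt : ℝ) - 1) := by push_cast; ring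
          have hlo : ((j : ℤ) - i) - 1 < B - A - ((j : ℤ) - (i : ℤ)) * ((nt : ℤ) - 1) := by
            have h' : ((((j : ℤ) - i) - 1 : ℤ) : ℝ) < ((B - A - ((j : ℤ) - (i : ℤ)) * ((nt : ℤ) - 1) : ℤ) : ℝ) := by
              push_cast
              linarith [hup, hu, hab, hA2, hB1]
            exact_mod_cast h'
          have hhi : B - A - ((j : ℤ) - (i : ℤ)) * ((nt : ℤ) - 1) < (j : ℤ) - i + 1 := by
            have h' : ((B - A - ((j : ℤ) - (i : ℤ)) * ((nt : ℤ) - 1) : ℤ) : ℝ) < (((j : ℤ) - i + 1 : ℤ) : ℝ) := by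
              push_cast
              linarith [hup, hu, hab, hA2, hB1]
            exact_mod_cast h'
          have hBval : B = A + ((j : ℤ) - i) * nt := by
            have h5 : B - A - ((j : ℤ) - (i : ℤ)) * ((nt : ℤ) - 1) = (j : ℤ) - i := by omega
            linear_combination h5
          rw [hBval] at hB1 hB2 hσ1 ⊢
          push_cast at hB1 hB2 hσ1 ⊢
          have hgap : (0:ℝ) ≤ 2 * (A : ℝ) + ((j : ℝ) - (i : ℝ)) * (nt : ℝ) + 1 - (nr : ℝ) := by
            linarith
          nlinarith [mul_nonneg hup.le hgap, hA1, hA2, hB1]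

/-- For `0 ≤ r ≤ min(n_t, n_r/K)`, the minimum over the number `k` of users in outage,
`min_{k=1,…,K} d*_{k·n_t, n_r}(k·r)`, is always attained either at `k = 1` (single-user
error event) or at `k = K` (all-users error event). -/
theorem mac_dmt_min_attained_at_ends (K nt nr : ℕ) (hK : 1 ≤ K) (hnt : 1 ≤ nt) (hnr : 1 ≤ nr)
    (r : ℝ) (hr0 : 0 ≤ r) (hr1 : r ≤ min (nt : ℝ) ((nr : ℝ) / (K : ℝ))) :
    (Finset.Icc 1 K).inf' (Finset.nonempty_Icc.mpr hK)
      (fun k => dstar (k * nt) nr ((k : ℝ) * r)) =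
      min (dstar nt nr r) (dstar (K * nt) nr ((K : ℝ) * r)) := by
  have hrt : r ≤ (nt : ℝ) := le_trans hr1 (min_le_left _ _)
  have hK0 : (0:ℝ) < (K : ℝ) := by exact_mod_cast hK
  have hKr : (K : ℝ) * r ≤ (nr : ℝ) := by
    have h := le_trans hr1 (min_le_right _ _)
    have := mul_le_mul_of_nonneg_left h (le_of_lt hK0)
    calc (K : ℝ) * r ≤ (K : ℝ) * ((nr : ℝ) / (K : ℝ)) := this
      _ = (nr : ℝ) := by field_simp
  have hone : dstar (1 * nt) nr (((1:ℕ) : ℝ) * r) = dstar nt nr r := by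
    norm_num
  apply le_antisymm
  · apply le_min
    · have h1 := Finset.inf'_le (fun k => dstar (k * nt) nr ((k : ℝ) * r))
        (Finset.mem_Icc.mpr ⟨le_refl 1, hK⟩)
      exact le_trans h1 (le_of_eq hone)
    · have h1 := Finset.inf'_le (fun k => dstar (k * nt) nr ((k : ℝ) * r))
        (Finset.mem_Icc.mpr ⟨hK, le_refl K⟩)
      exact h1
  · apply Finset.le_inf'
    intro k hk
    obtain ⟨hk1, hkK⟩ := Finset.mem_Icc.mp hk
    by_cases hc : ((1 : ℝ) + (k : ℝ)) * r ≤ (nr : ℝ)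
    · refine le_trans (min_le_left _ _) ?_
      have h := branch1 nt nr 1 k hk1 r hr0 hrt (by push_cast; linarith)
      rw [hone] at h
      exact h
    · push_neg at hc
      refine le_trans (min_le_right _ _) ?_
      have hK1 : (1:ℝ) ≤ (K : ℝ) := by exact_mod_cast hK
      have hsum2 : (nr : ℝ) ≤ ((k : ℝ) + (K : ℝ)) * r := by nlinarith
      exact branch2 nt nr k K hkK r hr0 hrt hsum2 hKr
end
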